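/- arXiv:2602.01366 — 2 statements merged into one kernel-verified Lean document; each statement's English description precedes it below -/
import Mathlib

section
/- Let 0 < α < 1, γ ≥ 0 with α + γ ≤ 1, and let λ > 0. Define f(t) = ∑_{n=0}^∞ c_n (-λ)^n t^{(α+γ)n} for t ≥ 0, where c_n are the Kilbas–Saigo coefficients with parameters (α, 1 + γ/α, γ/α), i.e. f(t) = E_{α, 1+γ/α, γ/α}(-λ t^{α+γ}). Then f(0) = 1, and for every t > 0 the stretched fractional relaxation equation holds: t^{-γ} · (1/Γ(1-α)) ∫_0^t f'(τ)(t-τ)^{-α} dτ = -λ f(t). -/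
open MeasureTheory intervalIntegral Set Filter Topology

open MeasureTheory intervalIntegral Set Filter Topology

/-- Kilbas–Saigo coefficients: `c 0 = 1` and
`c n = ∏_{k=0}^{n-1} Γ(1 + a(km + l)) / Γ(1 + a(km + l + 1))`. -/
noncomputable def ksCoeff (a m l : ℝ) (n : ℕ) : ℝ :=
  ∏ k ∈ Finset.range n,
    Real.Gamma (1 + a * (k * m + l)) / Real.Gamma (1 + a * (k * m + l + 1))

lemma ks_argA {α γ : ℝ} (k : ℕ) (hα0 : 0 < α) :
    1 + α * ((k : ℝ) * (1 + γ / α) + γ / α) = 1 + k * (α + γ) + γ := by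
  field_simp; ring

lemma ks_argB {α γ : ℝ} (k : ℕ) (hα0 : 0 < α) :
    1 + α * ((k : ℝ) * (1 + γ / α) + γ / α + 1) = 1 + ((k : ℝ) + 1) * (α + γ) := by
  field_simp; ring

lemma ks_pos {α γ : ℝ} (hα0 : 0 < α) (hγ : 0 ≤ γ) (n : ℕ) :
    0 < ksCoeff α (1 + γ / α) (γ / α) n := by
  apply Finset.prod_pos
  intro k _
  apply div_pos <;> apply Real.Gamma_pos_of_pos
  · rw [ks_argA k hα0]; positivity
  · rw [ks_argB k hα0]; positivity

lemma ks_rec {α γ : ℝ} (hα0 : 0 < α) (k : ℕ) :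
    ksCoeff α (1 + γ / α) (γ / α) (k + 1) = ksCoeff α (1 + γ / α) (γ / α) k *
      (Real.Gamma (1 + (k : ℝ) * (α + γ) + γ) / Real.Gamma (1 + ((k : ℝ) + 1) * (α + γ))) := by
  rw [ksCoeff, Finset.prod_range_succ, ks_argA k hα0, ks_argB k hα0]
  rfl

lemma ks_key {α γ : ℝ} (hα0 : 0 < α) (hγ : 0 ≤ γ) (n : ℕ) :
    ksCoeff α (1 + γ / α) (γ / α) (n + 1) * Real.Gamma ((α + γ) * ((n : ℝ) + 1) + 1)
      / Real.Gamma ((α + γ) * ((n : ℝ) + 1) + 1 - α) = ksCoeff α (1 + γ / α) (γ / α) n := by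
  rw [ks_rec hα0 n]
  have e1 : (α + γ) * ((n : ℝ) + 1) + 1 = 1 + ((n : ℝ) + 1) * (α + γ) := by ring
  have e2 : (α + γ) * ((n : ℝ) + 1) + 1 - α = 1 + (n : ℝ) * (α + γ) + γ := by ring
  rw [e2, e1]
  have h1 := Real.Gamma_pos_of_pos (show (0:ℝ) < 1 + (n : ℝ) * (α + γ) + γ by positivity)
  have h2 := Real.Gamma_pos_of_pos (show (0:ℝ) < 1 + ((n : ℝ) + 1) * (α + γ) by positivity)
  field_simp

lemma realBeta_integrable {p q t : ℝ} (hp : 0 < p) (hq : 0 < q) (ht : 0 < t) :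
    IntervalIntegrable (fun τ => τ ^ (p - 1) * (t - τ) ^ (q - 1)) volume 0 t := by
  apply IntervalIntegrable.trans (b := t / 2)
  · apply (intervalIntegrable_rpow' (by linarith)).mul_continuousOn
    apply ContinuousOn.rpow_const (by fun_prop)
    intro x hx
    rw [uIcc_of_le (by linarith)] at hx
    exact Or.inl (by rw [sub_ne_zero]; intro h; nlinarith [hx.2, hx.1])
  · have h1 : IntervalIntegrable (fun x : ℝ => x ^ (q - 1)) volume 0 (t / 2) :=
      intervalIntegrable_rpow' (by linarith)
    have h2 := (h1.comp_sub_left t).symm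
    simp only [sub_zero] at h2
    have h3 : IntervalIntegrable (fun x : ℝ => (t - x) ^ (q - 1)) volume (t / 2) t := by
      have : t - t / 2 = t / 2 := by ring
      rw [this] at h2; exact h2
    apply h3.continuousOn_mul
    apply ContinuousOn.rpow_const (by fun_prop)
    intro x hx
    rw [uIcc_of_le (by linarith)] at hx
    exact Or.inl (ne_of_gt (lt_of_lt_of_le (by linarith) hx.1))

lemma realBeta_value {p q t : ℝ} (hp : 0 < p) (hq : 0 < q) (ht : 0 < t) :
    ∫ τ in (0:ℝ)..t, τ ^ (p - 1) * (t - τ) ^ (q - 1)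
      = Real.Gamma p * Real.Gamma q / Real.Gamma (p + q) * t ^ (p + q - 1) := by
  have h1 : ((∫ τ in (0:ℝ)..t, τ ^ (p - 1) * (t - τ) ^ (q - 1) : ℝ) : ℂ)
      = ∫ τ in (0:ℝ)..t, (τ : ℂ) ^ ((p : ℂ) - 1) * ((t : ℂ) - τ) ^ ((q : ℂ) - 1) := by
    rw [← intervalIntegral.integral_ofReal]
    apply intervalIntegral.integral_congr
    intro x hx
    rw [uIcc_of_le ht.le] at hx
    have hx0 : (0:ℝ) ≤ x := hx.1
    have hxt : x ≤ t := hx.2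
    push_cast
    rw [Complex.ofReal_cpow hx0, Complex.ofReal_cpow (by linarith)]
    push_cast
    ring
  have h2 := Complex.betaIntegral_scaled (p : ℂ) (q : ℂ) ht
  have h3 := Complex.Gamma_mul_Gamma_eq_betaIntegral
    (s := (p : ℂ)) (t := (q : ℂ)) (by simpa using hp) (by simpa using hq)
  have hΓ : Complex.Gamma ((p : ℂ) + q) ≠ 0 := by
    rw [show ((p:ℂ) + q) = ((p + q : ℝ) : ℂ) by push_cast; ring, Complex.Gamma_ofReal]
    exact_mod_cast (Real.Gamma_pos_of_pos (by linarith)).ne'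
  have hbeta : Complex.betaIntegral p q
      = Complex.Gamma p * Complex.Gamma q / Complex.Gamma ((p:ℂ) + q) := by
    rw [eq_div_iff hΓ, mul_comm]
    exact h3.symm
  apply Complex.ofReal_injective
  rw [h1, h2, hbeta]
  rw [show ((p:ℂ) + q - 1) = (((p + q - 1 : ℝ)) : ℂ) by push_cast; ring,
    ← Complex.ofReal_cpow ht.le]
  rw [show ((p:ℂ) + q) = (((p + q : ℝ)) : ℂ) by push_cast; ring]
  rw [Complex.Gamma_ofReal, Complex.Gamma_ofReal, Complex.Gamma_ofReal]
  push_cast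
  ring

lemma gautschi {α y : ℝ} (hα0 : 0 < α) (hα1 : α < 1) (hy : 0 < y) :
    y * Real.Gamma y ≤ Real.Gamma (y + α) * (y + α) ^ ((1:ℝ) - α) := by
  have hyα : 0 < y + α := by linarith
  have h1 : y + α ∈ Set.Ioi (0:ℝ) := hyα
  have h2 : y + α + 1 ∈ Set.Ioi (0:ℝ) := by simp only [Set.mem_Ioi]; linarith
  have key := Real.convexOn_log_Gamma.2 h1 h2 hα0.le (by linarith : (0:ℝ) ≤ 1 - α)
    (by ring)
  simp only [smul_eq_mul, Function.comp_apply] at key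
  have hpt : α * (y + α) + (1 - α) * (y + α + 1) = y + 1 := by ring
  rw [hpt] at key
  have hΓ1 : Real.Gamma (y + 1) = y * Real.Gamma y := Real.Gamma_add_one hy.ne'
  have hΓ2 : Real.Gamma (y + α + 1) = (y + α) * Real.Gamma (y + α) :=
    Real.Gamma_add_one hyα.ne'
  have hGy : 0 < Real.Gamma y := Real.Gamma_pos_of_pos hy
  have hGyα : 0 < Real.Gamma (y + α) := Real.Gamma_pos_of_pos hyα
  rw [hΓ1, hΓ2, Real.log_mul hy.ne' hGy.ne', Real.log_mul hyα.ne' hGyα.ne'] at key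
  have hrw : Real.Gamma (y + α) * (y + α) ^ ((1:ℝ) - α)
      = Real.exp (Real.log (Real.Gamma (y + α)) + (1 - α) * Real.log (y + α)) := by
    rw [Real.exp_add, Real.exp_log hGyα, ← Real.log_rpow hyα, Real.exp_log (by positivity)]
  rw [hrw, show y * Real.Gamma y = Real.exp (Real.log y + Real.log (Real.Gamma y)) by
    rw [Real.exp_add, Real.exp_log hy, Real.exp_log hGy]]
  apply Real.exp_le_exp.2
  linarith [key]

lemma gamma_ratio_le {α y : ℝ} (hα0 : 0 < α) (hα1 : α < 1) (hy : 1 ≤ y) :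
    Real.Gamma y / Real.Gamma (y + α) ≤ 2 * (y + α) ^ (-α) := by
  have hy0 : (0:ℝ) < y := by linarith
  have hyα : (0:ℝ) < y + α := by linarith
  have hG := gautschi hα0 hα1 hy0
  have hGyα : 0 < Real.Gamma (y + α) := Real.Gamma_pos_of_pos hyα
  have hGy : 0 < Real.Gamma y := Real.Gamma_pos_of_pos hy0
  have hsplit : (y + α) ^ ((1:ℝ) - α) = (y + α) * (y + α) ^ (-α) := by
    rw [show (1:ℝ) - α = 1 + (-α) by ring, Real.rpow_add hyα, Real.rpow_one]
  rw [hsplit] at hG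
  have h2y : y + α ≤ 2 * y := by linarith
  have hpow : (0:ℝ) < (y + α) ^ (-α) := Real.rpow_pos_of_pos hyα _
  rw [div_le_iff₀ hGyα]
  nlinarith [mul_le_mul_of_nonneg_right h2y (mul_pos hGyα hpow).le]

lemma ks_summable {α γ : ℝ} (hα0 : 0 < α) (hα1 : α < 1) (hγ : 0 ≤ γ) {r : ℝ} (hr : 0 < r) :
    Summable (fun n : ℕ => ksCoeff α (1 + γ / α) (γ / α) n * r ^ n * ((n : ℝ) + 1)) := by
  set β := α + γ with hβdef
  have hβ : 0 < β := by positivity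
  set c := ksCoeff α (1 + γ / α) (γ / α) with hc
  have hterm : ∀ n : ℕ, 0 < c n * r ^ n * ((n : ℝ) + 1) := by
    intro n
    have := ks_pos (γ := γ) hα0 hγ n
    positivity
  apply summable_of_ratio_test_tendsto_lt_one (l := 0) one_pos
    (Eventually.of_forall fun n => (hterm n).ne')
  have harg : Tendsto (fun n : ℕ => (n : ℝ) * β + (1 + γ + α)) atTop atTop :=
    tendsto_atTop_add_const_right _ _ (tendsto_natCast_atTop_atTop.atTop_mul_const hβ)
  have hb : Tendsto (fun n : ℕ => 4 * r * ((n : ℝ) * β + (1 + γ + α)) ^ (-α)) atTop (𝓝 0) := by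
    have := ((tendsto_rpow_neg_atTop hα0).comp harg).const_mul (4 * r)
    simpa using this
  apply squeeze_zero (fun n => div_nonneg (norm_nonneg _) (norm_nonneg _)) _ hb
  intro n
  set y : ℝ := 1 + (n : ℝ) * β + γ with hydef
  have hy1 : (1:ℝ) ≤ y := by
    have : (0:ℝ) ≤ (n : ℝ) * β := by positivity
    simp only [hydef]; linarith
  have hargy : (n : ℝ) * β + (1 + γ + α) = y + α := by rw [hydef]; ring
  rw [hargy]
  have hcn1 : c (n + 1) ≤ 2 * (y + α) ^ (-α) * c n := by
    rw [hc, ks_rec hα0 n]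
    have h1 : 1 + ((n : ℝ) + 1) * (α + γ) = y + α := by rw [hydef, hβdef]; ring
    have h2 : 1 + (n : ℝ) * (α + γ) + γ = y := by rw [hydef, hβdef]
    rw [h1, h2, mul_comm (2 * (y + α) ^ (-α))]
    exact mul_le_mul_of_nonneg_left (gamma_ratio_le hα0 hα1 hy1)
      (ks_pos hα0 hγ n).le
  rw [Real.norm_eq_abs, Real.norm_eq_abs, abs_of_pos (hterm _), abs_of_pos (hterm _),
    div_le_iff₀ (hterm n)]
  push_cast
  have hcn : 0 ≤ c n := (ks_pos hα0 hγ n).le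
  have hpow : (0:ℝ) < (y + α) ^ (-α) := Real.rpow_pos_of_pos (by linarith) _
  calc c (n + 1) * r ^ (n + 1) * ((n : ℝ) + 1 + 1)
      ≤ (2 * (y + α) ^ (-α) * c n) * r ^ (n + 1) * ((n : ℝ) + 1 + 1) := by
        apply mul_le_mul_of_nonneg_right (mul_le_mul_of_nonneg_right hcn1 (by positivity))
        push_cast; positivity
    _ ≤ (2 * (y + α) ^ (-α) * c n) * r ^ (n + 1) * (2 * ((n : ℝ) + 1)) := by
        apply mul_le_mul_of_nonneg_left (by push_cast; linarith) (by positivity)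
    _ = 4 * r * (y + α) ^ (-α) * (c n * r ^ n * ((n : ℝ) + 1)) := by
        rw [pow_succ]; ring

/-- The Kilbas–Saigo function `f(t) = E_{α,1+γ/α,γ/α}(-λ t^{α+γ})` solves the
stretched fractional relaxation equation
`t^{-γ} · (1/Γ(1-α)) ∫_0^t f'(τ)(t-τ)^{-α} dτ = -λ f(t)` with `f(0) = 1`. -/
theorem kilbasSaigo_solves_stretched_relaxation (α γ lam : ℝ)
    (hα0 : 0 < α) (hα1 : α < 1) (hγ : 0 ≤ γ) (hαγ : α + γ ≤ 1) (hlam : 0 < lam)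
    (f : ℝ → ℝ)
    (hf : ∀ t : ℝ, 0 ≤ t →
      f t = ∑' n : ℕ,
        ksCoeff α (1 + γ / α) (γ / α) n * (-lam) ^ n * t ^ ((α + γ) * n)) :
    f 0 = 1 ∧
      ∀ t : ℝ, 0 < t →
        t ^ (-γ) *
            ((1 / Real.Gamma (1 - α)) *
              ∫ τ in (0 : ℝ)..t, deriv f τ * (t - τ) ^ (-α))
          = -lam * f t := by
  have hβ : 0 < α + γ := by linarith
  have h1mα : (0:ℝ) < 1 - α := by linarith
  have hΓα : 0 < Real.Gamma (1 - α) := Real.Gamma_pos_of_pos h1mα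
  set c : ℕ → ℝ := ksCoeff α (1 + γ / α) (γ / α) with hc
  have hcpos : ∀ n, 0 < c n := fun n => ks_pos hα0 hγ n
  set a : ℕ → ℝ := fun n => c n * (-lam) ^ n with ha
  have hf' : ∀ t : ℝ, 0 ≤ t → f t = ∑' n : ℕ, a n * t ^ ((α + γ) * (n : ℝ)) := by
    intro t ht
    rw [hf t ht]
  have master : ∀ r : ℝ, 0 < r → Summable (fun n : ℕ => c n * r ^ n * ((n : ℝ) + 1)) :=
    fun r hr => ks_summable hα0 hα1 hγ hr
  have master' : ∀ r : ℝ, 0 < r → Summable (fun n : ℕ => c n * r ^ n) := by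
    intro r hr
    apply Summable.of_nonneg_of_le
      (fun n => mul_nonneg (hcpos n).le (pow_nonneg hr.le n))
      (fun n => le_mul_of_one_le_right
        (mul_nonneg (hcpos n).le (pow_nonneg hr.le n))
        (by linarith [(Nat.cast_nonneg n : (0:ℝ) ≤ (n:ℝ))]))
      (master r hr)
  have hana : ∀ n : ℕ, |a n| = c n * lam ^ n := by
    intro n
    rw [ha]
    simp only
    rw [abs_mul, abs_pow, abs_neg, abs_of_pos hlam, abs_of_pos (hcpos n)]
  have hsum_abs : ∀ z : ℝ, 0 < z → Summable (fun n : ℕ => a n * z ^ ((α + γ) * (n : ℝ))) := by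
    intro z hz
    apply Summable.of_abs
    apply Summable.of_nonneg_of_le (fun n => abs_nonneg _) _
      (master' (lam * z ^ (α + γ)) (by positivity))
    intro n
    rw [abs_mul, abs_of_nonneg (Real.rpow_nonneg hz.le _), hana n]
    rw [Real.rpow_mul hz.le, Real.rpow_natCast, mul_pow]
    ring_nf
    exact le_refl _
  -- termwise derivative
  have hS : ∀ τ : ℝ, 0 < τ →
      HasDerivAt (fun z : ℝ => ∑' n : ℕ, a n * z ^ ((α + γ) * (n : ℝ)))
        (∑' n : ℕ, a n * ((α + γ) * (n : ℝ) * τ ^ ((α + γ) * (n : ℝ) - 1))) τ := by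
    intro τ hτ
    have hM : (0:ℝ) < τ + 1 := by linarith
    have hus : Summable (fun n : ℕ =>
        (c n * (lam * (τ + 1) ^ (α + γ)) ^ n * ((n : ℝ) + 1)) * ((α + γ) * (2 / τ))) :=
      (master _ (by positivity)).mul_right _
    apply hasDerivAt_tsum_of_isPreconnected hus
      (isOpen_Ioo : IsOpen (Set.Ioo (τ/2) (τ+1))) isPreconnected_Ioo
      (y₀ := τ) (y := τ) ?_ ?_ ?_ ?_ ?_
    · intro n z hz
      have hz0 : 0 < z := lt_trans (by linarith : (0:ℝ) < τ / 2) hz.1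
      exact HasDerivAt.const_mul (a n)
        (Real.hasDerivAt_rpow_const (Or.inl hz0.ne'))
    · intro n z hz
      have hz0 : 0 < z := lt_trans (by linarith : (0:ℝ) < τ / 2) hz.1
      have e1 : z ^ ((α + γ) * (n : ℝ) - 1) = z ^ ((α + γ) * (n : ℝ)) * z⁻¹ := by
        rw [show (α + γ) * (n : ℝ) - 1 = (α + γ) * (n : ℝ) + (-1) by ring,
          Real.rpow_add hz0, Real.rpow_neg_one]
      have e2 : z ^ ((α + γ) * (n : ℝ)) ≤ ((τ + 1) ^ (α + γ)) ^ n := by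
        rw [← Real.rpow_natCast ((τ + 1) ^ (α + γ)) n, ← Real.rpow_mul hM.le]
        exact Real.rpow_le_rpow hz0.le hz.2.le (by positivity)
      have e3 : z⁻¹ ≤ 2 / τ := by
        have h24 : z⁻¹ ≤ (τ / 2)⁻¹ :=
          inv_anti₀ (by linarith) hz.1.le
        rwa [inv_div] at h24
      rw [Real.norm_eq_abs, abs_mul, abs_of_nonneg (mul_nonneg (mul_nonneg hβ.le
        (Nat.cast_nonneg n)) (Real.rpow_nonneg hz0.le _)), hana n, e1]
      calc c n * lam ^ n * ((α + γ) * (n : ℝ) * (z ^ ((α + γ) * (n : ℝ)) * z⁻¹))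
          ≤ c n * lam ^ n * ((α + γ) * ((n : ℝ) + 1) * (((τ + 1) ^ (α + γ)) ^ n * (2 / τ))) := by
            apply mul_le_mul_of_nonneg_left _
              (mul_nonneg (hcpos n).le (pow_nonneg hlam.le n))
            apply mul_le_mul
            · apply mul_le_mul_of_nonneg_left (by linarith [(Nat.cast_nonneg n : (0:ℝ) ≤ (n:ℝ))]) hβ.le
            · exact mul_le_mul e2 e3 (inv_nonneg.2 hz0.le)
                (pow_nonneg (Real.rpow_nonneg hM.le _) n)
            · exact mul_nonneg (Real.rpow_nonneg hz0.le _) (inv_nonneg.2 hz0.le)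
            · exact mul_nonneg hβ.le (by positivity)
          _ = (c n * (lam * (τ + 1) ^ (α + γ)) ^ n * ((n : ℝ) + 1)) * ((α + γ) * (2 / τ)) := by
            rw [mul_pow]; ring
    · exact ⟨by linarith, by linarith⟩
    · exact hsum_abs τ hτ
    · exact ⟨by linarith, by linarith⟩
  have hderiv : ∀ τ : ℝ, 0 < τ →
      deriv f τ = ∑' n : ℕ, a n * ((α + γ) * (n : ℝ) * τ ^ ((α + γ) * (n : ℝ) - 1)) := by
    intro τ hτ
    have hev : f =ᶠ[nhds τ] fun z : ℝ => ∑' n : ℕ, a n * z ^ ((α + γ) * (n : ℝ)) := by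
      filter_upwards [Ioi_mem_nhds hτ] with z hz
      exact hf' z hz.le
    rw [hev.deriv_eq]
    exact (hS τ hτ).deriv
  constructor
  · rw [hf' 0 le_rfl]
    rw [tsum_eq_single 0 ?_]
    · norm_num
      rw [ha]
      simp [hc, ksCoeff]
    · intro n hn
      have hne : (α + γ) * (n : ℝ) ≠ 0 :=
        ne_of_gt (mul_pos hβ (by exact_mod_cast Nat.pos_of_ne_zero hn))
      rw [Real.zero_rpow hne, mul_zero]
  intro t ht
  set F : ℕ → ℝ → ℝ := fun n τ =>
    a n * ((α + γ) * (n : ℝ) * τ ^ ((α + γ) * (n : ℝ) - 1)) * (t - τ) ^ (-α) with hF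
  -- beta values
  have hBv : ∀ n : ℕ, ∫ τ in (0:ℝ)..t, τ ^ ((α + γ) * ((n : ℝ) + 1) - 1) * (t - τ) ^ (-α)
      = Real.Gamma ((α + γ) * ((n : ℝ) + 1)) * Real.Gamma (1 - α)
          / Real.Gamma ((α + γ) * ((n : ℝ) + 1) + 1 - α)
          * t ^ ((α + γ) * ((n : ℝ) + 1) - α) := by
    intro n
    have hp : 0 < (α + γ) * ((n : ℝ) + 1) := by positivity
    have h := realBeta_value hp h1mα ht
    rw [show (1:ℝ) - α - 1 = -α by ring,
      show (α + γ) * ((n : ℝ) + 1) + (1 - α) - 1 = (α + γ) * ((n : ℝ) + 1) - α by ring,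
      show (α + γ) * ((n : ℝ) + 1) + (1 - α) = (α + γ) * ((n : ℝ) + 1) + 1 - α by ring] at h
    exact h
  have hBi : ∀ n : ℕ, IntervalIntegrable
      (fun τ => τ ^ ((α + γ) * ((n : ℝ) + 1) - 1) * (t - τ) ^ (-α)) volume 0 t := by
    intro n
    have hp : 0 < (α + γ) * ((n : ℝ) + 1) := by positivity
    have h := realBeta_integrable hp h1mα ht
    rwa [show (1:ℝ) - α - 1 = -α by ring] at h
  have hF0 : F 0 = fun _ => (0:ℝ) := by
    funext τ
    rw [hF]
    norm_num
  have hFsucc : ∀ n : ℕ, F (n + 1) = fun τ =>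
      (a (n + 1) * ((α + γ) * ((n : ℝ) + 1)))
        * (τ ^ ((α + γ) * ((n : ℝ) + 1) - 1) * (t - τ) ^ (-α)) := by
    intro n
    funext τ
    rw [hF]
    push_cast
    ring
  have hFint : ∀ n : ℕ, IntegrableOn (F n) (Ioc 0 t) volume := by
    intro n
    cases n with
    | zero =>
      rw [hF0]
      exact integrable_zero _ _ _
    | succ n =>
      rw [hFsucc n]
      exact (intervalIntegrable_iff_integrableOn_Ioc_of_le ht.le).1 ((hBi n).const_mul _)
  have hV0 : ∫ τ in Ioc 0 t, F 0 τ = 0 := by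
    rw [hF0]
    simp
  have hVal : ∀ n : ℕ, ∫ τ in Ioc 0 t, F (n + 1) τ
      = a (n + 1) * ((α + γ) * ((n : ℝ) + 1))
          * (Real.Gamma ((α + γ) * ((n : ℝ) + 1)) * Real.Gamma (1 - α)
            / Real.Gamma ((α + γ) * ((n : ℝ) + 1) + 1 - α)
            * t ^ ((α + γ) * ((n : ℝ) + 1) - α)) := by
    intro n
    rw [← intervalIntegral.integral_of_le ht.le, hFsucc n,
      intervalIntegral.integral_const_mul, hBv n]
  have hNval : ∀ n : ℕ, ∫ τ in Ioc 0 t, ‖F (n + 1) τ‖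
      = (c (n + 1) * lam ^ (n + 1) * ((α + γ) * ((n : ℝ) + 1)))
          * (Real.Gamma ((α + γ) * ((n : ℝ) + 1)) * Real.Gamma (1 - α)
            / Real.Gamma ((α + γ) * ((n : ℝ) + 1) + 1 - α)
            * t ^ ((α + γ) * ((n : ℝ) + 1) - α)) := by
    intro n
    have hp : 0 < (α + γ) * ((n : ℝ) + 1) := by positivity
    have heq : EqOn (fun τ => ‖F (n + 1) τ‖)
        (fun τ => (c (n + 1) * lam ^ (n + 1) * ((α + γ) * ((n : ℝ) + 1)))
          * (τ ^ ((α + γ) * ((n : ℝ) + 1) - 1) * (t - τ) ^ (-α))) (Ioc 0 t) := by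
      intro τ hτ
      simp only
      rw [hFsucc n]
      simp only
      rw [norm_mul, Real.norm_eq_abs, Real.norm_eq_abs, abs_mul, hana (n + 1),
        abs_of_nonneg hp.le,
        abs_of_nonneg (mul_nonneg (Real.rpow_nonneg hτ.1.le _)
          (Real.rpow_nonneg (by linarith [hτ.2] : (0:ℝ) ≤ t - τ) _))]
    rw [setIntegral_congr_fun measurableSet_Ioc heq,
      ← intervalIntegral.integral_of_le ht.le,
      intervalIntegral.integral_const_mul, hBv n]
  -- key simplification of the n+1 term
  have hGadd : ∀ n : ℕ, ((α + γ) * ((n : ℝ) + 1)) * Real.Gamma ((α + γ) * ((n : ℝ) + 1))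
      = Real.Gamma ((α + γ) * ((n : ℝ) + 1) + 1) := by
    intro n
    have hp : 0 < (α + γ) * ((n : ℝ) + 1) := by positivity
    rw [Real.Gamma_add_one hp.ne']
  have hΓ2pos : ∀ n : ℕ, 0 < Real.Gamma ((α + γ) * ((n : ℝ) + 1) + 1 - α) := by
    intro n
    apply Real.Gamma_pos_of_pos
    have : (0:ℝ) ≤ (α + γ) * ((n : ℝ) + 1) := by positivity
    linarith
  have hkey' : ∀ n : ℕ, c (n + 1) * Real.Gamma ((α + γ) * ((n : ℝ) + 1) + 1)
      = c n * Real.Gamma ((α + γ) * ((n : ℝ) + 1) + 1 - α) := by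
    intro n
    have h := ks_key (α := α) (γ := γ) hα0 hγ n
    rw [← hc, div_eq_iff (hΓ2pos n).ne'] at h
    exact h
  have htp : ∀ n : ℕ, t ^ (-γ) * t ^ ((α + γ) * ((n : ℝ) + 1) - α) = t ^ ((α + γ) * (n : ℝ)) := by
    intro n
    rw [← Real.rpow_add ht]
    congr 1
    ring
  have htp2 : ∀ n : ℕ, t ^ ((α + γ) * ((n : ℝ) + 1) - α)
      = (t ^ (α + γ)) ^ n * t ^ ((α + γ) - α) := by
    intro n
    rw [← Real.rpow_natCast (t ^ (α + γ)) n, ← Real.rpow_mul ht.le, ← Real.rpow_add ht]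
    congr 1
    ring
  have hnorm_sum : Summable (fun n : ℕ => ∫ τ in Ioc 0 t, ‖F n τ‖) := by
    apply (summable_nat_add_iff 1).1
    have heq : (fun n : ℕ => ∫ τ in Ioc 0 t, ‖F (n + 1) τ‖)
        = fun n : ℕ => (lam * Real.Gamma (1 - α) * t ^ ((α + γ) - α))
            * (c n * (lam * t ^ (α + γ)) ^ n) := by
      funext n
      rw [hNval n, htp2 n]
      have hk := hkey' n
      rw [← hGadd n] at hk
      field_simp [(hΓ2pos n).ne']
      linear_combination (lam ^ (n + 1) * (t ^ (α + γ)) ^ n) * hk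
    rw [heq]
    exact ((master' (lam * t ^ (α + γ)) (by positivity)).mul_left _)
  have hswap : ∫ τ in Ioc 0 t, (∑' n : ℕ, F n τ) = ∑' n : ℕ, ∫ τ in Ioc 0 t, F n τ :=
    (MeasureTheory.integral_tsum_of_summable_integral_norm hFint hnorm_sum).symm
  have hIoc : ∫ τ in (0:ℝ)..t, deriv f τ * (t - τ) ^ (-α)
      = ∑' n : ℕ, ∫ τ in Ioc 0 t, F n τ := by
    rw [intervalIntegral.integral_of_le ht.le, ← hswap]
    apply setIntegral_congr_fun measurableSet_Ioc
    intro τ hτ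
    show deriv f τ * (t - τ) ^ (-α) = ∑' n : ℕ, F n τ
    rw [hderiv τ hτ.1, ← tsum_mul_right]
  rw [hIoc, ← tsum_mul_left, ← tsum_mul_left]
  have hterm0 : t ^ (-γ) * (1 / Real.Gamma (1 - α) * ∫ τ in Ioc 0 t, F 0 τ) = 0 := by
    rw [hV0]
    ring
  have htermS : ∀ n : ℕ, t ^ (-γ) * (1 / Real.Gamma (1 - α) * ∫ τ in Ioc 0 t, F (n + 1) τ)
      = -lam * (a n * t ^ ((α + γ) * (n : ℝ))) := by
    intro n
    rw [hVal n, ← htp n]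
    have hk := hkey' n
    rw [← hGadd n] at hk
    have han : a (n + 1) = -lam * ((-lam) ^ n * c (n + 1)) := by
      rw [ha]
      simp only
      rw [pow_succ]
      ring
    rw [han, ha]
    simp only
    field_simp [(hΓ2pos n).ne']
    linear_combination (-(-lam) ^ n) * hk
  have hHsum : Summable (fun n : ℕ =>
      t ^ (-γ) * (1 / Real.Gamma (1 - α) * ∫ τ in Ioc 0 t, F n τ)) := by
    apply (summable_nat_add_iff 1).1
    have heq : (fun n : ℕ =>
        t ^ (-γ) * (1 / Real.Gamma (1 - α) * ∫ τ in Ioc 0 t, F (n + 1) τ))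
        = fun n : ℕ => -lam * (a n * t ^ ((α + γ) * (n : ℝ))) := funext htermS
    rw [heq]
    exact (hsum_abs t ht).mul_left _
  rw [hHsum.tsum_eq_zero_add, hterm0, zero_add]
  rw [tsum_congr htermS, tsum_mul_left, ← hf' t ht.le]
end

section
/- Let 0 < α < 1 and let f : [0,∞) → ℝ be continuously differentiable with |f'(t)| ≤ M e^{ct} for all t ≥ 0, for some constants M ≥ 0 and c ≥ 0. Then for every s > c, the Laplace transform of the Caputo derivative of f satisfies ∫_0^∞ e^{-st} (^C D_t^α f)(t) dt = s^α F(s) - s^{α-1} f(0), where F(s) = ∫_0^∞ e^{-st} f(t) dt and s^α denotes the real power. -/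
open MeasureTheory Set Real Filter

lemma aux_mul_exp_le {b t : ℝ} (hb : 0 < b) (ht : 0 ≤ t) :
    t * Real.exp (-(b * t)) ≤ (2 / b) * Real.exp (-(b / 2 * t)) := by
  have h1 : t ≤ (2 / b) * Real.exp (b / 2 * t) := by
    have h2 := Real.add_one_le_exp (b / 2 * t)
    have h3 : (0:ℝ) < 2 / b := by positivity
    have h4 : (2/b) * (b/2*t) ≤ (2/b) * Real.exp (b/2*t) :=
      mul_le_mul_of_nonneg_left (by linarith) h3.le
    have h5 : (2/b) * (b/2*t) = t := by field_simp
    linarith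
  calc t * Real.exp (-(b * t))
      ≤ ((2 / b) * Real.exp (b / 2 * t)) * Real.exp (-(b * t)) :=
        mul_le_mul_of_nonneg_right h1 (Real.exp_pos _).le
    _ = (2 / b) * Real.exp (-(b / 2 * t)) := by
        rw [mul_assoc, ← Real.exp_add]; ring_nf

lemma aux_integrableOn_id_mul_exp {b : ℝ} (hb : 0 < b) :
    IntegrableOn (fun t => t * Real.exp (-(b * t))) (Set.Ioi (0:ℝ)) := by
  have hint : IntegrableOn (fun t => (2 / b) * Real.exp (-(b / 2 * t))) (Set.Ioi (0:ℝ)) := by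
    have := (exp_neg_integrableOn_Ioi 0 (half_pos hb)).const_mul (2 / b)
    simp only [neg_mul] at this; exact this
  refine hint.mono' ?_ ?_
  · exact (continuous_id.mul (Real.continuous_exp.comp (by continuity))).aestronglyMeasurable
  · filter_upwards [ae_restrict_mem measurableSet_Ioi] with t ht
    rw [Real.norm_eq_abs, abs_mul, abs_of_nonneg (le_of_lt ht), abs_of_nonneg (Real.exp_pos _).le]
    exact aux_mul_exp_le hb (le_of_lt ht)

lemma aux_int_rpow_exp {b β : ℝ} (hb : 0 < b) (hβ : 0 ≤ β) (hβ1 : β ≤ 1) :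
    IntegrableOn (fun t => t ^ β * Real.exp (-(b * t))) (Set.Ioi (0:ℝ)) := by
  have hint : IntegrableOn (fun t => Real.exp (-(b * t)) + t * Real.exp (-(b * t)))
      (Set.Ioi (0:ℝ)) := by
    refine Integrable.add ?_ (aux_integrableOn_id_mul_exp hb)
    have := exp_neg_integrableOn_Ioi 0 hb
    simp only [neg_mul] at this; exact this
  refine hint.mono' ?_ ?_
  · refine ContinuousOn.aestronglyMeasurable ?_ measurableSet_Ioi
    exact (ContinuousOn.rpow_const continuousOn_id (fun x hx => Or.inl (ne_of_gt hx))).mul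
      (Real.continuous_exp.comp (by continuity)).continuousOn
  · filter_upwards [ae_restrict_mem measurableSet_Ioi] with t ht
    have ht0 : (0:ℝ) < t := ht
    have hpow : t ^ β ≤ 1 + t := by
      rcases le_total t 1 with h | h
      · have := Real.rpow_le_one ht0.le h hβ
        linarith
      · have := Real.rpow_le_rpow_of_exponent_le h hβ1
        rw [Real.rpow_one] at this
        linarith
    rw [Real.norm_eq_abs, abs_mul, abs_of_nonneg (Real.rpow_nonneg ht0.le _),
      abs_of_nonneg (Real.exp_pos _).le]
    nlinarith [Real.exp_pos (-(b * t)), mul_le_mul_of_nonneg_right hpow (Real.exp_pos (-(b*t))).le]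

lemma aux_f_bound (f : ℝ → ℝ) (hf : ContDiff ℝ 1 f) (M c : ℝ) (hM : 0 ≤ M) (hc : 0 ≤ c)
    (hbound : ∀ t : ℝ, 0 ≤ t → |deriv f t| ≤ M * Real.exp (c * t)) :
    ∀ t : ℝ, 0 ≤ t → |f t| ≤ |f 0| + M * Real.exp (c * t) * t := by
  intro t ht
  have hdiff : ∀ x ∈ Set.uIcc 0 t, DifferentiableAt ℝ f x :=
    fun x _ => (hf.differentiable one_ne_zero).differentiableAt
  have hint : IntervalIntegrable (deriv f) volume 0 t :=
    ((hf.continuous_deriv le_rfl).continuousOn).intervalIntegrable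
  have heq : ∫ τ in (0:ℝ)..t, deriv f τ = f t - f 0 :=
    intervalIntegral.integral_deriv_eq_sub hdiff hint
  have hb : ‖∫ τ in (0:ℝ)..t, deriv f τ‖ ≤ (M * Real.exp (c * t)) * |t - 0| := by
    refine intervalIntegral.norm_integral_le_of_norm_le_const (fun x hx => ?_)
    rw [Set.uIoc_of_le ht] at hx
    refine (hbound x hx.1.le).trans ?_
    have hexp : Real.exp (c * x) ≤ Real.exp (c * t) :=
      Real.exp_le_exp.2 (mul_le_mul_of_nonneg_left hx.2 hc)
    exact mul_le_mul_of_nonneg_left hexp hM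
  rw [heq, Real.norm_eq_abs, sub_zero, abs_of_nonneg ht] at hb
  calc |f t| = |f 0 + (f t - f 0)| := by ring_nf
    _ ≤ |f 0| + |f t - f 0| := abs_add_le _ _
    _ ≤ |f 0| + M * Real.exp (c * t) * t := by linarith

lemma aux_integrable_exp_f (f : ℝ → ℝ) (hf : ContDiff ℝ 1 f) (M c : ℝ) (hM : 0 ≤ M) (hc : 0 ≤ c)
    (hbound : ∀ t : ℝ, 0 ≤ t → |deriv f t| ≤ M * Real.exp (c * t)) (s : ℝ) (hs : c < s) :
    IntegrableOn (fun t => Real.exp (-(s * t)) * f t) (Set.Ioi (0:ℝ)) := by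
  have hs0 : 0 < s := lt_of_le_of_lt hc hs
  have hb : 0 < s - c := sub_pos.2 hs
  have hint : IntegrableOn
      (fun t => |f 0| * Real.exp (-(s * t)) + M * (t * Real.exp (-((s - c) * t))))
      (Set.Ioi (0:ℝ)) := by
    refine Integrable.add ?_ ((aux_integrableOn_id_mul_exp hb).const_mul M)
    have := (exp_neg_integrableOn_Ioi 0 hs0).const_mul |f 0|
    simpa [neg_mul] using this
  refine hint.mono' ?_ ?_
  · exact ((Real.continuous_exp.comp (by continuity)).mul hf.continuous).aestronglyMeasurable
  · filter_upwards [ae_restrict_mem measurableSet_Ioi] with t ht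
    have ht0 : (0:ℝ) ≤ t := (le_of_lt ht)
    have h1 := aux_f_bound f hf M c hM hc hbound t ht0
    have h2 : Real.exp (-(s * t)) * (M * Real.exp (c * t) * t)
        = M * (t * Real.exp (-((s - c) * t))) := by
      have hh : Real.exp (-(s * t)) * Real.exp (c * t) = Real.exp (-((s - c) * t)) := by
        rw [← Real.exp_add]; ring_nf
      rw [← hh]; ring
    rw [Real.norm_eq_abs, abs_mul, abs_of_nonneg (Real.exp_pos _).le]
    calc Real.exp (-(s * t)) * |f t|
        ≤ Real.exp (-(s * t)) * (|f 0| + M * Real.exp (c * t) * t) :=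
          mul_le_mul_of_nonneg_left h1 (Real.exp_pos _).le
      _ = |f 0| * Real.exp (-(s * t)) + Real.exp (-(s * t)) * (M * Real.exp (c * t) * t) := by ring
      _ = |f 0| * Real.exp (-(s * t)) + M * (t * Real.exp (-((s - c) * t))) := by rw [h2]

lemma aux_integrable_exp_g (f : ℝ → ℝ) (hf : ContDiff ℝ 1 f) (M c : ℝ) (hM : 0 ≤ M) (hc : 0 ≤ c)
    (hbound : ∀ t : ℝ, 0 ≤ t → |deriv f t| ≤ M * Real.exp (c * t)) (s : ℝ) (hs : c < s) :
    IntegrableOn (fun t => Real.exp (-(s * t)) * deriv f t) (Set.Ioi (0:ℝ)) := by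
  have hb : 0 < s - c := sub_pos.2 hs
  have hint : IntegrableOn (fun t => M * Real.exp (-((s - c) * t))) (Set.Ioi (0:ℝ)) := by
    have := (exp_neg_integrableOn_Ioi 0 hb).const_mul M
    simp only [neg_mul] at this; exact this
  refine hint.mono' ?_ ?_
  · exact ((Real.continuous_exp.comp (by continuity)).mul
      (hf.continuous_deriv le_rfl)).aestronglyMeasurable
  · filter_upwards [ae_restrict_mem measurableSet_Ioi] with t ht
    have h2 : Real.exp (-(s * t)) * (M * Real.exp (c * t)) = M * Real.exp (-((s - c) * t)) := by
      have hh : Real.exp (-(s * t)) * Real.exp (c * t) = Real.exp (-((s - c) * t)) := by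
        rw [← Real.exp_add]; ring_nf
      rw [← hh]; ring
    rw [Real.norm_eq_abs, abs_mul, abs_of_nonneg (Real.exp_pos _).le]
    calc Real.exp (-(s * t)) * |deriv f t|
        ≤ Real.exp (-(s * t)) * (M * Real.exp (c * t)) :=
          mul_le_mul_of_nonneg_left (hbound t (le_of_lt ht)) (Real.exp_pos _).le
      _ = M * Real.exp (-((s - c) * t)) := h2

lemma aux_laplace_deriv (f : ℝ → ℝ) (hf : ContDiff ℝ 1 f) (M c : ℝ) (hM : 0 ≤ M) (hc : 0 ≤ c)
    (hbound : ∀ t : ℝ, 0 ≤ t → |deriv f t| ≤ M * Real.exp (c * t)) (s : ℝ) (hs : c < s) :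
    ∫ t in Set.Ioi (0:ℝ), Real.exp (-(s * t)) * deriv f t
      = s * (∫ t in Set.Ioi (0:ℝ), Real.exp (-(s * t)) * f t) - f 0 := by
  have hs0 : 0 < s := lt_of_le_of_lt hc hs
  have hb : 0 < s - c := sub_pos.2 hs
  have hderiv : ∀ x ∈ Set.Ici (0:ℝ), HasDerivAt (fun t => Real.exp (-(s * t)) * f t)
      (Real.exp (-(s * x)) * deriv f x - s * (Real.exp (-(s * x)) * f x)) x := by
    intro x _
    have h1 : HasDerivAt (fun y : ℝ => -(s * y)) (-s) x := by
      have h := ((hasDerivAt_id x).const_mul s).neg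
      simp only [id, mul_one] at h; exact h
    have h2 : HasDerivAt (fun y : ℝ => Real.exp (-(s * y))) (Real.exp (-(s * x)) * (-s)) x :=
      h1.exp
    have h3 : HasDerivAt f (deriv f x) x := (hf.differentiable one_ne_zero).differentiableAt.hasDerivAt
    have := h2.mul h3
    exact this.congr_deriv (by ring)
  have hfint : IntegrableOn (fun t => Real.exp (-(s * t)) * f t) (Set.Ioi (0:ℝ)) :=
    aux_integrable_exp_f f hf M c hM hc hbound s hs
  have hgint : IntegrableOn (fun t => Real.exp (-(s * t)) * deriv f t) (Set.Ioi (0:ℝ)) :=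
    aux_integrable_exp_g f hf M c hM hc hbound s hs
  have hFint : IntegrableOn
      (fun x => Real.exp (-(s * x)) * deriv f x - s * (Real.exp (-(s * x)) * f x))
      (Set.Ioi (0:ℝ)) := hgint.sub (hfint.const_mul s)
  have htend : Tendsto (fun t => Real.exp (-(s * t)) * f t) atTop (nhds 0) := by
    have hbd : ∀ᶠ t in atTop, ‖Real.exp (-(s * t)) * f t‖ ≤
        |f 0| * Real.exp (-(s * t)) + M * ((2 / (s - c)) * Real.exp (-((s - c) / 2 * t))) := by
      filter_upwards [eventually_ge_atTop (0:ℝ)] with t ht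
      have h1 := aux_f_bound f hf M c hM hc hbound t ht
      have hh : Real.exp (-(s * t)) * Real.exp (c * t) = Real.exp (-((s - c) * t)) := by
        rw [← Real.exp_add]; ring_nf
      have h3 : t * Real.exp (-((s - c) * t)) ≤ (2 / (s - c)) * Real.exp (-((s - c) / 2 * t)) :=
        aux_mul_exp_le hb ht
      rw [Real.norm_eq_abs, abs_mul, abs_of_nonneg (Real.exp_pos _).le]
      calc Real.exp (-(s * t)) * |f t|
          ≤ Real.exp (-(s * t)) * (|f 0| + M * Real.exp (c * t) * t) :=
            mul_le_mul_of_nonneg_left h1 (Real.exp_pos _).le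
        _ = |f 0| * Real.exp (-(s * t)) + M * (t * (Real.exp (-(s * t)) * Real.exp (c * t))) := by
            ring
        _ = |f 0| * Real.exp (-(s * t)) + M * (t * Real.exp (-((s - c) * t))) := by rw [hh]
        _ ≤ |f 0| * Real.exp (-(s * t))
            + M * ((2 / (s - c)) * Real.exp (-((s - c) / 2 * t))) := by
            have := mul_le_mul_of_nonneg_left h3 hM
            linarith
    have e1 : Tendsto (fun t : ℝ => Real.exp (-(s * t))) atTop (nhds 0) := by
      refine Real.tendsto_exp_atBot.comp (tendsto_neg_atTop_atBot.comp ?_)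
      exact Tendsto.const_mul_atTop hs0 tendsto_id
    have e2 : Tendsto (fun t : ℝ => Real.exp (-((s - c) / 2 * t))) atTop (nhds 0) := by
      refine Real.tendsto_exp_atBot.comp (tendsto_neg_atTop_atBot.comp ?_)
      exact Tendsto.const_mul_atTop (half_pos hb) tendsto_id
    have hlim := (e1.const_mul (|f 0|)).add ((e2.const_mul (2 / (s - c))).const_mul M)
    simp only [mul_zero, add_zero] at hlim
    exact squeeze_zero_norm' hbd hlim
  have key := integral_Ioi_of_hasDerivAt_of_tendsto'
    (f := fun t => Real.exp (-(s * t)) * f t) (a := 0) (m := 0) hderiv hFint htend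
  rw [MeasureTheory.integral_sub hgint (hfint.const_mul s)] at key
  have h5 : ∫ a in Set.Ioi (0:ℝ), s * (Real.exp (-(s * a)) * f a)
      = s * ∫ a in Set.Ioi (0:ℝ), Real.exp (-(s * a)) * f a :=
    MeasureTheory.integral_const_mul s _
  rw [h5] at key
  simp only [mul_zero, neg_zero, Real.exp_zero, one_mul, zero_sub] at key
  linarith

lemma aux_gamma_base (α s : ℝ) (hα0 : 0 < α) (hα1 : α < 1) (hs : 0 < s) :
    ∫ u in Set.Ioi (0:ℝ), Real.exp (-(s * u)) * u ^ (-α)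
      = (1 / s) ^ (1 - α) * Real.Gamma (1 - α) := by
  have h := Real.integral_rpow_mul_exp_neg_mul_Ioi (by linarith : (0:ℝ) < 1 - α) hs
  simp only [show (1:ℝ) - α - 1 = -α from by ring] at h
  rw [← h]
  refine MeasureTheory.setIntegral_congr_fun measurableSet_Ioi (fun u hu => ?_)
  ring

lemma aux_gamma_shift (α s : ℝ) (hα0 : 0 < α) (hα1 : α < 1) (hs : 0 < s) (τ : ℝ) :
    ∫ t in Set.Ioi τ, Real.exp (-(s * t)) * (t - τ) ^ (-α)
      = Real.exp (-(s * τ)) * ((1 / s) ^ (1 - α) * Real.Gamma (1 - α)) := by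
  have h1 : ∫ t in Set.Ioi τ, Real.exp (-(s * t)) * (t - τ) ^ (-α)
      = ∫ x, Set.indicator (Set.Ioi τ) (fun t => Real.exp (-(s * t)) * (t - τ) ^ (-α)) x := by
    rw [MeasureTheory.integral_indicator measurableSet_Ioi]
  have h2 : ∫ x, Set.indicator (Set.Ioi τ) (fun t => Real.exp (-(s * t)) * (t - τ) ^ (-α)) x
      = ∫ x, Set.indicator (Set.Ioi τ)
          (fun t => Real.exp (-(s * t)) * (t - τ) ^ (-α)) (x + τ) := by
    rw [MeasureTheory.integral_add_right_eq_self]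
  have h3 : ∀ x : ℝ, Set.indicator (Set.Ioi τ)
        (fun t => Real.exp (-(s * t)) * (t - τ) ^ (-α)) (x + τ)
      = Set.indicator (Set.Ioi 0)
          (fun u => Real.exp (-(s * τ)) * (Real.exp (-(s * u)) * u ^ (-α))) x := by
    intro x
    by_cases hx : 0 < x
    · rw [Set.indicator_of_mem (by simpa using hx), Set.indicator_of_mem (Set.mem_Ioi.2 hx)]
      rw [add_sub_cancel_right, show -(s * (x + τ)) = -(s * τ) + -(s * x) from by ring,
        Real.exp_add]
      ring
    · rw [Set.indicator_of_notMem (by simpa using hx), Set.indicator_of_notMem (by simpa using hx)]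
  rw [h1, h2]
  simp_rw [h3]
  rw [MeasureTheory.integral_indicator measurableSet_Ioi, MeasureTheory.integral_const_mul,
    aux_gamma_base α s hα0 hα1 hs]

lemma aux_rpow_intble (α t : ℝ) (hα1 : α < 1) :
    IntervalIntegrable (fun τ => (t - τ) ^ (-α)) volume 0 t := by
  have h := intervalIntegral.intervalIntegrable_rpow' (a := t) (b := 0) (show (-1:ℝ) < -α by linarith)
  simpa using h.comp_sub_left t

lemma aux_inner_int (g : ℝ → ℝ) (hg : Continuous g) (α t : ℝ) (hα1 : α < 1) :
    IntervalIntegrable (fun τ => g τ * (t - τ) ^ (-α)) volume 0 t :=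
  (aux_rpow_intble α t hα1).continuousOn_mul hg.continuousOn

lemma aux_rpow_integral (α t : ℝ) (hα0 : 0 < α) (hα1 : α < 1) (ht : 0 ≤ t) :
    ∫ τ in (0:ℝ)..t, (t - τ) ^ (-α) = t ^ (1 - α) / (1 - α) := by
  rw [intervalIntegral.integral_comp_sub_left (fun u => u ^ (-α)) t, sub_self, sub_zero]
  rw [integral_rpow (Or.inl (by linarith : (-1:ℝ) < -α))]
  rw [Real.zero_rpow (by intro h; linarith), show -α + 1 = 1 - α from by ring]
  ring

/-- Laplace transform of the Caputo derivative: for `0 < α < 1` and a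
continuously differentiable `f` with `|f'(t)| ≤ M e^{c t}` on `[0,∞)`,
for every `s > c` one has
`∫_0^∞ e^{-st} (^C D_t^α f)(t) dt = s^α F(s) - s^{α-1} f(0)`,
where `F(s) = ∫_0^∞ e^{-st} f(t) dt`. -/
theorem laplace_caputo_derivative (α : ℝ) (hα0 : 0 < α) (hα1 : α < 1)
    (f : ℝ → ℝ) (hf : ContDiff ℝ 1 f)
    (M c : ℝ) (hM : 0 ≤ M) (hc : 0 ≤ c)
    (hbound : ∀ t : ℝ, 0 ≤ t → |deriv f t| ≤ M * Real.exp (c * t)) :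
    ∀ s : ℝ, c < s →
      (∫ t in Set.Ioi (0 : ℝ),
          Real.exp (-(s * t)) *
            ((1 / Real.Gamma (1 - α)) *
              ∫ τ in (0 : ℝ)..t, deriv f τ * (t - τ) ^ (-α)))
        = s ^ α * (∫ t in Set.Ioi (0 : ℝ), Real.exp (-(s * t)) * f t)
            - s ^ (α - 1) * f 0 := by
  intro s hs
  have hg : Continuous (deriv f) := hf.continuous_deriv le_rfl
  have hs0 : 0 < s := lt_of_le_of_lt hc hs
  have hb : 0 < s - c := sub_pos.2 hs
  have hΓ : 0 < Real.Gamma (1 - α) := Real.Gamma_pos_of_pos (by linarith)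
  set H : ℝ → ℝ → ℝ := fun t τ =>
    if 0 < τ ∧ τ < t then Real.exp (-(s * t)) * (deriv f τ * (t - τ) ^ (-α)) else 0 with hH
  -- measurability of the kernel on the product space
  have hmeas : AEStronglyMeasurable (Function.uncurry H) (volume.prod volume) := by
    have hset : MeasurableSet {p : ℝ × ℝ | 0 < p.2 ∧ p.2 < p.1} :=
      (measurableSet_lt measurable_const measurable_snd).inter
        (measurableSet_lt measurable_snd measurable_fst)
    have hfun : Measurable (fun p : ℝ × ℝ =>
        Real.exp (-(s * p.1)) * (deriv f p.2 * (p.1 - p.2) ^ (-α))) := by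
      have h1 : Measurable (deriv f) := hg.measurable
      fun_prop
    have heq : Function.uncurry H
        = Set.indicator {p : ℝ × ℝ | 0 < p.2 ∧ p.2 < p.1}
          (fun p => Real.exp (-(s * p.1)) * (deriv f p.2 * (p.1 - p.2) ^ (-α))) := by
      funext p
      simp only [Function.uncurry, hH, Set.indicator_apply, Set.mem_setOf_eq]
    rw [heq]
    exact (hfun.indicator hset).aestronglyMeasurable
  -- slices
  have hslice : ∀ t : ℝ, 0 < t → (fun τ => H t τ)
      = Set.indicator (Set.Ioo 0 t)
        (fun τ => Real.exp (-(s * t)) * (deriv f τ * (t - τ) ^ (-α))) := by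
    intro t ht
    funext τ
    simp only [hH, Set.indicator_apply, Set.mem_Ioo]
  have hzero : ∀ t τ : ℝ, ¬ 0 < t → H t τ = 0 := by
    intro t τ ht
    simp only [hH]
    rw [if_neg]
    rintro ⟨h1, h2⟩
    exact ht (lt_trans h1 h2)
  have hIoo : ∀ t : ℝ, 0 < t →
      IntegrableOn (fun τ => deriv f τ * (t - τ) ^ (-α)) (Set.Ioo 0 t) := by
    intro t ht
    have h2 : IntegrableOn (fun τ => deriv f τ * (t - τ) ^ (-α)) (Set.Ioc 0 t) := by
      rw [← intervalIntegrable_iff_integrableOn_Ioc_of_le ht.le]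
      exact aux_inner_int (deriv f) hg α t hα1
    exact h2.mono_set Set.Ioo_subset_Ioc_self
  have hsliceInt : ∀ t : ℝ, Integrable (H t) volume := by
    intro t
    show Integrable (fun τ => H t τ) volume
    by_cases ht : 0 < t
    · rw [hslice t ht, integrable_indicator_iff measurableSet_Ioo]
      exact (hIoo t ht).const_mul _
    · have hz : (fun τ => H t τ) = fun _ => (0:ℝ) := funext fun τ => hzero t τ ht
      rw [hz]
      exact integrable_zero _ _ _
  -- bound on the norm-slice integrals
  have hnormbd : ∀ t : ℝ, 0 < t → (∫ τ, ‖H t τ‖)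
      ≤ (M / (1 - α)) * (t ^ (1 - α) * Real.exp (-((s - c) * t))) := by
    intro t ht
    have h1 : (fun τ => ‖H t τ‖) = Set.indicator (Set.Ioo 0 t)
        (fun τ => ‖Real.exp (-(s * t)) * (deriv f τ * (t - τ) ^ (-α))‖) := by
      funext τ
      rw [congrFun (hslice t ht) τ]
      exact norm_indicator_eq_indicator_norm _ _
    have h2 : ∀ τ ∈ Set.Ioo (0:ℝ) t,
        ‖Real.exp (-(s * t)) * (deriv f τ * (t - τ) ^ (-α))‖
          ≤ (M * Real.exp (c * t) * Real.exp (-(s * t))) * (t - τ) ^ (-α) := by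
      intro τ hτ
      have hτt : 0 < t - τ := by linarith [hτ.2]
      have hpow : (0:ℝ) ≤ (t - τ) ^ (-α) := Real.rpow_nonneg hτt.le _
      rw [Real.norm_eq_abs, abs_mul, abs_mul, abs_of_nonneg (Real.exp_pos _).le,
        abs_of_nonneg hpow]
      have hd : |deriv f τ| ≤ M * Real.exp (c * t) := by
        refine (hbound τ hτ.1.le).trans ?_
        exact mul_le_mul_of_nonneg_left
          (Real.exp_le_exp.2 (mul_le_mul_of_nonneg_left hτ.2.le hc)) hM
      calc Real.exp (-(s * t)) * (|deriv f τ| * (t - τ) ^ (-α))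
          ≤ Real.exp (-(s * t)) * ((M * Real.exp (c * t)) * (t - τ) ^ (-α)) := by
            have := mul_le_mul_of_nonneg_right hd hpow
            exact mul_le_mul_of_nonneg_left this (Real.exp_pos _).le
        _ = (M * Real.exp (c * t) * Real.exp (-(s * t))) * (t - τ) ^ (-α) := by ring
    have h3 : IntegrableOn
        (fun τ => (M * Real.exp (c * t) * Real.exp (-(s * t))) * (t - τ) ^ (-α))
        (Set.Ioo 0 t) := by
      have h4 : IntegrableOn (fun τ => (t - τ) ^ (-α)) (Set.Ioc 0 t) := by
        rw [← intervalIntegrable_iff_integrableOn_Ioc_of_le ht.le]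
        exact aux_rpow_intble α t hα1
      exact (h4.mono_set Set.Ioo_subset_Ioc_self).const_mul _
    have h5 : ∫ τ in Set.Ioo (0:ℝ) t, (t - τ) ^ (-α) = t ^ (1 - α) / (1 - α) := by
      rw [← integral_Ioc_eq_integral_Ioo, ← intervalIntegral.integral_of_le ht.le]
      exact aux_rpow_integral α t hα0 hα1 ht.le
    have hnint : IntegrableOn
        (fun τ => ‖Real.exp (-(s * t)) * (deriv f τ * (t - τ) ^ (-α))‖) (Set.Ioo 0 t) :=
      ((hIoo t ht).const_mul _).norm
    calc (∫ τ, ‖H t τ‖)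
        = ∫ τ in Set.Ioo (0:ℝ) t,
            ‖Real.exp (-(s * t)) * (deriv f τ * (t - τ) ^ (-α))‖ := by
          rw [h1, integral_indicator measurableSet_Ioo]
      _ ≤ ∫ τ in Set.Ioo (0:ℝ) t,
            (M * Real.exp (c * t) * Real.exp (-(s * t))) * (t - τ) ^ (-α) :=
          setIntegral_mono_on hnint h3 measurableSet_Ioo h2
      _ = (M * Real.exp (c * t) * Real.exp (-(s * t))) * (t ^ (1 - α) / (1 - α)) := by
          rw [MeasureTheory.integral_const_mul, h5]
      _ = (M / (1 - α)) * (t ^ (1 - α) * (Real.exp (c * t) * Real.exp (-(s * t)))) := by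
          ring
      _ = (M / (1 - α)) * (t ^ (1 - α) * Real.exp (-((s - c) * t))) := by
          rw [← Real.exp_add, show c * t + -(s * t) = -((s - c) * t) from by ring]
  -- integrability of the kernel on the product space
  have hInt : Integrable (Function.uncurry H) (volume.prod volume) := by
    rw [MeasureTheory.integrable_prod_iff hmeas]
    constructor
    · exact Filter.Eventually.of_forall hsliceInt
    · have hD : Integrable (Set.indicator (Set.Ioi 0)
          (fun t => (M / (1 - α)) * (t ^ (1 - α) * Real.exp (-((s - c) * t))))) volume := by
        rw [integrable_indicator_iff measurableSet_Ioi]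
        exact (aux_int_rpow_exp hb (by linarith) (by linarith)).const_mul _
      refine hD.mono' hmeas.norm.integral_prod_right' ?_
      refine Filter.Eventually.of_forall (fun t => ?_)
      by_cases ht : 0 < t
      · rw [Real.norm_eq_abs, abs_of_nonneg (integral_nonneg (fun τ => norm_nonneg _)),
          Set.indicator_of_mem (Set.mem_Ioi.2 ht)]
        exact hnormbd t ht
      · have hz : (fun τ => ‖H t τ‖) = fun _ => (0:ℝ) := by
          funext τ; rw [hzero t τ ht, norm_zero]
        rw [Set.indicator_of_notMem (by simpa using ht)]
        refine le_of_eq ?_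
        show ‖∫ τ, ‖H t τ‖‖ = 0
        rw [hz, MeasureTheory.integral_zero, norm_zero]
  -- Fubini
  have hswap : (∫ t, ∫ τ, H t τ) = ∫ τ, ∫ t, H t τ := integral_integral_swap hInt
  -- left side identification
  have hLHSeq : (∫ t, ∫ τ, H t τ)
      = ∫ t in Set.Ioi (0:ℝ),
          Real.exp (-(s * t)) * (∫ τ in (0:ℝ)..t, deriv f τ * (t - τ) ^ (-α)) := by
    rw [← integral_indicator measurableSet_Ioi]
    congr 1
    funext t
    by_cases ht : 0 < t
    · rw [Set.indicator_of_mem (Set.mem_Ioi.2 ht), hslice t ht,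
        integral_indicator measurableSet_Ioo, MeasureTheory.integral_const_mul,
        ← integral_Ioc_eq_integral_Ioo, ← intervalIntegral.integral_of_le ht.le]
    · rw [Set.indicator_of_notMem (by simpa using ht)]
      have hz : (fun τ => H t τ) = fun _ => (0:ℝ) := funext fun τ => hzero t τ ht
      rw [hz]
      simp
  -- right side identification
  have hRHSeq : (∫ τ, ∫ t, H t τ)
      = ((1 / s) ^ (1 - α) * Real.Gamma (1 - α))
          * ∫ τ in Set.Ioi (0:ℝ), Real.exp (-(s * τ)) * deriv f τ := by
    have key : ∀ τ : ℝ, (∫ t, H t τ) = Set.indicator (Set.Ioi 0)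
        (fun τ => ((1 / s) ^ (1 - α) * Real.Gamma (1 - α))
          * (Real.exp (-(s * τ)) * deriv f τ)) τ := by
      intro τ
      by_cases hτ : 0 < τ
      · rw [Set.indicator_of_mem (Set.mem_Ioi.2 hτ)]
        have hHt : (fun t => H t τ) = Set.indicator (Set.Ioi τ)
            (fun t => deriv f τ * (Real.exp (-(s * t)) * (t - τ) ^ (-α))) := by
          funext t
          by_cases ht : τ < t
          · rw [Set.indicator_of_mem (Set.mem_Ioi.2 ht)]
            simp only [hH]
            rw [if_pos ⟨hτ, ht⟩]
            ring
          · rw [Set.indicator_of_notMem (by simpa using ht)]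
            simp only [hH]
            rw [if_neg (by tauto)]
        rw [hHt, integral_indicator measurableSet_Ioi, MeasureTheory.integral_const_mul,
          aux_gamma_shift α s hα0 hα1 hs0 τ]
        ring
      · have hz : (fun t => H t τ) = fun _ => 0 := by
          funext t
          simp only [hH]
          rw [if_neg (by tauto)]
        rw [Set.indicator_of_notMem (by simpa using hτ), hz]
        simp
      
    simp_rw [key]
    rw [integral_indicator measurableSet_Ioi, MeasureTheory.integral_const_mul]
  -- assemble
  have hpull : (∫ t in Set.Ioi (0 : ℝ),
        Real.exp (-(s * t)) * ((1 / Real.Gamma (1 - α)) *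
          ∫ τ in (0 : ℝ)..t, deriv f τ * (t - τ) ^ (-α)))
      = (1 / Real.Gamma (1 - α)) * ∫ t in Set.Ioi (0:ℝ),
          Real.exp (-(s * t)) * (∫ τ in (0:ℝ)..t, deriv f τ * (t - τ) ^ (-α)) := by
    rw [← MeasureTheory.integral_const_mul]
    refine setIntegral_congr_fun measurableSet_Ioi (fun t _ => ?_)
    ring
  have hlap := aux_laplace_deriv f hf M c hM hc hbound s hs
  have hinv : (1 / s : ℝ) ^ (1 - α) = s ^ (α - 1) := by
    rw [one_div, Real.inv_rpow hs0.le, ← Real.rpow_neg hs0.le,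
      show -(1 - α) = α - 1 from by ring]
  have hpow : s ^ (α:ℝ) = s ^ (α - 1) * s := by
    have h := Real.rpow_add_one (ne_of_gt hs0) (α - 1)
    rwa [sub_add_cancel] at h
  rw [hpull, ← hLHSeq, hswap, hRHSeq, hlap, hinv]
  have hΓne : Real.Gamma (1 - α) ≠ 0 := ne_of_gt hΓ
  have hcancel : ∀ X : ℝ, (1 / Real.Gamma (1 - α))
      * ((s ^ (α - 1) * Real.Gamma (1 - α)) * X) = s ^ (α - 1) * X := by
    intro X; field_simp
  rw [hcancel, mul_sub, ← mul_assoc, ← hpow]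
end
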